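/- arXiv:2501.13018 — 2 statements merged into one kernel-verified Lean document; each statement's English description precedes it below -/
import Mathlib

section
/- In a finite directed acyclic graph, define recursively for each node $i$: if $i$ is a leaf (no children) then $v_i = 1$; otherwise $v_i = \sum_{j \in \mathrm{children}(i)} v_j / |\mathrm{parents}(j)|$. Then the sum of $v_i$ over all root nodes (nodes with no parents) equals the total number of leaves in the DAG. -/
open Finset

/-- In a finite DAG, if `v` satisfies the DAGGER recursion for the effective
number of leaves (`v i = 1` at leaves, `v i = ∑_{j ∈ children(i)} v j / |parents(j)|`
otherwise), then the sum of `v` over the roots equals the number of leaves. -/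
theorem dagger_effective_leaves
    {V : Type*} [Fintype V] [DecidableEq V]
    (E : V → V → Prop) [DecidableRel E]
    (hacyc : ∀ i, ¬ Relation.TransGen E i i)
    (v : V → ℝ)
    (hleaf : ∀ i, (∀ j, ¬ E i j) → v i = 1)
    (hrec : ∀ i, (∃ j, E i j) →
      v i = ∑ j ∈ univ.filter (fun j => E i j),
        v j / (univ.filter (fun k => E k j)).card) :
    ∑ i ∈ univ.filter (fun i => ∀ k, ¬ E k i), v i
      = (univ.filter (fun i => ∀ j, ¬ E i j)).card := by
  classical
  set p : V → ℕ := fun j => (univ.filter (fun k => E k j)).card with hp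
  -- key: sum over non-leaves equals sum over non-roots
  have key : ∑ i ∈ univ.filter (fun i => ¬ ∀ j, ¬ E i j), v i
      = ∑ j ∈ univ.filter (fun j => ¬ ∀ k, ¬ E k j), v j := by
    have h1 : ∀ i ∈ univ.filter (fun i => ¬ ∀ j, ¬ E i j),
        v i = ∑ j ∈ univ.filter (fun j => E i j), v j / p j := by
      intro i hi
      simp only [mem_filter] at hi
      push_neg at hi
      exact hrec i hi.2
    rw [Finset.sum_congr rfl h1]
    have h2 : ∑ i ∈ univ.filter (fun i => ¬ ∀ j, ¬ E i j),
        ∑ j ∈ univ.filter (fun j => E i j), v j / p j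
        = ∑ i ∈ univ, ∑ j ∈ univ.filter (fun j => E i j), v j / p j := by
      rw [← Finset.sum_filter_add_sum_filter_not univ (fun i => ¬ ∀ j, ¬ E i j)]
      have hz : ∑ i ∈ univ.filter (fun i => ¬¬ ∀ j, ¬ E i j),
          ∑ j ∈ univ.filter (fun j => E i j), v j / p j = 0 := by
        apply Finset.sum_eq_zero
        intro i hi
        simp only [mem_filter, not_not] at hi
        rw [Finset.filter_false_of_mem, Finset.sum_empty]
        intro j _; exact hi.2 j
      rw [hz, add_zero]
    rw [h2]
    have h3 : ∑ i ∈ univ, ∑ j ∈ univ.filter (fun j => E i j), v j / p j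
        = ∑ j ∈ univ, (p j : ℝ) * (v j / p j) := by
      simp_rw [Finset.sum_filter]
      rw [Finset.sum_comm]
      refine Finset.sum_congr rfl fun j _ => ?_
      rw [← Finset.sum_filter, Finset.sum_const, nsmul_eq_mul]
    rw [h3,
      ← Finset.sum_filter_add_sum_filter_not univ (fun j => ¬ ∀ k, ¬ E k j)
        (fun j => (p j : ℝ) * (v j / p j))]
    have hz2 : ∑ j ∈ univ.filter (fun j => ¬¬ ∀ k, ¬ E k j),
        (p j : ℝ) * (v j / p j) = 0 := by
      apply Finset.sum_eq_zero
      intro j hj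
      simp only [mem_filter, not_not] at hj
      have hpj : p j = 0 := by
        rw [hp]
        simp only [Finset.card_eq_zero]
        apply Finset.filter_false_of_mem
        intro k _; exact hj.2 k
      rw [hpj]; simp
    rw [hz2, add_zero]
    refine Finset.sum_congr rfl fun j hj => ?_
    simp only [mem_filter] at hj
    push_neg at hj
    obtain ⟨k, hk⟩ := hj.2
    have hk' : k ∈ univ.filter (fun k => E k j) := by
      simp [hk]
    have hp0 : (p j : ℝ) ≠ 0 := by
      have : 0 < p j := Finset.card_pos.mpr ⟨k, hk'⟩
      exact_mod_cast this.ne'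
    field_simp
  have hleaves : ∑ i ∈ univ.filter (fun i => ∀ j, ¬ E i j), v i
      = (univ.filter (fun i => ∀ j, ¬ E i j)).card := by
    rw [Finset.sum_congr rfl (fun i hi => hleaf i (by simpa using (mem_filter.mp hi).2)),
      Finset.sum_const, nsmul_eq_mul, mul_one]
  have hs1 := Finset.sum_filter_add_sum_filter_not univ (fun i => ∀ k, ¬ E k i) v
  have hs2 := Finset.sum_filter_add_sum_filter_not univ (fun i => ∀ j, ¬ E i j) v
  rw [← hleaves]
  linarith [hs1, hs2, key]
end

section
/- In a finite directed acyclic graph, define for each node $i$: if $i$ is a leaf then $m_i = 1$; otherwise $m_i = 1 + \sum_{j \in \mathrm{children}(i)} m_j / |\mathrm{parents}(j)|$. Then the sum of $m_i$ over all root nodes equals the total number of nodes in the DAG. -/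
open Finset

/-- In a finite DAG, if `m` satisfies the DAGGER recursion for the effective
number of nodes (`m i = 1` at leaves, `m i = 1 + ∑_{j ∈ children(i)} m j / |parents(j)|`
otherwise), then the sum of `m` over the roots equals the total number of nodes. -/
theorem dagger_effective_nodes
    {V : Type*} [Fintype V] [DecidableEq V]
    (E : V → V → Prop) [DecidableRel E]
    (hacyc : ∀ i, ¬ Relation.TransGen E i i)
    (m : V → ℝ)
    (hleaf : ∀ i, (∀ j, ¬ E i j) → m i = 1)
    (hrec : ∀ i, (∃ j, E i j) →
      m i = 1 + ∑ j ∈ univ.filter (fun j => E i j),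
        m j / (univ.filter (fun k => E k j)).card) :
    ∑ i ∈ univ.filter (fun i => ∀ k, ¬ E k i), m i
      = Fintype.card V := by
  set f : V → ℝ := fun j => m j / (univ.filter (fun k => E k j)).card with hf
  have hall : ∀ i, m i = 1 + ∑ j ∈ univ.filter (fun j => E i j), f j := by
    intro i
    by_cases h : ∃ j, E i j
    · exact hrec i h
    · push_neg at h
      rw [hleaf i h, Finset.filter_false_of_mem (fun j _ => h j), Finset.sum_empty, add_zero]
  have key : ∑ i, m i
      = Fintype.card V + ∑ j ∈ univ.filter (fun j => ¬ ∀ k, ¬ E k j), m j := by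
    calc ∑ i, m i = ∑ i, (1 + ∑ j ∈ univ.filter (fun j => E i j), f j) :=
          Finset.sum_congr rfl (fun i _ => hall i)
      _ = Fintype.card V + ∑ i, ∑ j ∈ univ.filter (fun j => E i j), f j := by
          rw [Finset.sum_add_distrib, Finset.sum_const, Finset.card_univ]; simp
      _ = Fintype.card V + ∑ j : V, ∑ i ∈ univ.filter (fun i => E i j), f j := by
          congr 1
          simp only [Finset.sum_filter]
          exact Finset.sum_comm
      _ = Fintype.card V + ∑ j ∈ univ.filter (fun j => ¬ ∀ k, ¬ E k j), m j := by
          congr 1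
          rw [← Finset.sum_filter_add_sum_filter_not univ (fun j => ¬ ∀ k, ¬ E k j)]
          have h2 : ∑ j ∈ univ.filter (fun j => ¬¬ ∀ k, ¬ E k j),
              ∑ i ∈ univ.filter (fun i => E i j), f j = 0 := by
            apply Finset.sum_eq_zero
            intro j hj
            simp only [Finset.mem_filter, not_not] at hj
            apply Finset.sum_eq_zero
            intro i hi
            simp only [Finset.mem_filter] at hi
            exact absurd hi.2 (hj.2 i)
          rw [h2, add_zero]
          apply Finset.sum_congr rfl
          intro j hj
          simp only [Finset.mem_filter, not_forall, not_not] at hj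
          obtain ⟨k, hk⟩ := hj.2
          have hcard : ((univ.filter (fun k => E k j)).card : ℝ) ≠ 0 := by
            have : (univ.filter (fun k => E k j)).card ≠ 0 :=
              Finset.card_ne_zero_of_mem (Finset.mem_filter.mpr ⟨Finset.mem_univ k, hk⟩)
            exact_mod_cast this
          rw [Finset.sum_const, hf, nsmul_eq_mul]
          field_simp
  have hsplit := Finset.sum_filter_add_sum_filter_not univ (fun i => ∀ k, ¬ E k i) m
  rw [← hsplit] at key
  linarith
end
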